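/- Let f : X → X be a continuous map on a metric space (X,d), let r > 0, and let x, y ∈ X be such that d(f^j(x), f^j(y)) ≤ r for all j ∈ ℕ. If (x,y) is a distributional ε-pair of type 2 for f and d for some 0 < ε ≤ 1, then (x,y) is a mean Li–Yorke ε²-pair for f and d. -/

import Mathlib

open Filter

/-- Lower density of a set of positive integers. -/
noncomputable def lowerDensity (A : Set ℕ) : ℝ :=
  liminf (fun n : ℕ => (Nat.card ↥(A ∩ Set.Icc 1 n) : ℝ) / (n : ℝ)) atTop

/-- Upper density of a set of positive integers. -/
noncomputable def upperDensity (A : Set ℕ) : ℝ :=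
  limsup (fun n : ℕ => (Nat.card ↥(A ∩ Set.Icc 1 n) : ℝ) / (n : ℝ)) atTop

/-- The lower distributional function Φ_{(x,y)}(δ) generated by `f` for the pair `(x,y)`. -/
noncomputable def lowerDistFn {X : Type*} [MetricSpace X] (f : X → X) (x y : X) (δ : ℝ) : ℝ :=
  lowerDensity {j : ℕ | dist (f^[j] x) (f^[j] y) < δ}

/-- The upper distributional function Φ*_{(x,y)}(δ) generated by `f` for the pair `(x,y)`. -/
noncomputable def upperDistFn {X : Type*} [MetricSpace X] (f : X → X) (x y : X) (δ : ℝ) : ℝ :=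
  upperDensity {j : ℕ | dist (f^[j] x) (f^[j] y) < δ}

/-- `(x,y)` is a mean Li–Yorke ε-pair for `f` and the metric of `X`. -/
def IsMLYPair {X : Type*} [MetricSpace X] (f : X → X) (ε : ℝ) (x y : X) : Prop :=
  ε ≤ limsup (fun n : ℕ => (∑ j ∈ Finset.Icc 1 n, dist (f^[j] x) (f^[j] y)) / (n : ℝ)) atTop ∧
    liminf (fun n : ℕ => (∑ j ∈ Finset.Icc 1 n, dist (f^[j] x) (f^[j] y)) / (n : ℝ)) atTop = 0

/-- If `d(f^j(x), f^j(y)) ≤ r` for all `j ∈ ℕ` and `(x,y)` is a distributional ε-pair of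
type 2 with `0 < ε ≤ 1`, then `(x,y)` is a mean Li–Yorke ε²-pair. -/
theorem d2Pair_isMLYPair {X : Type*} [MetricSpace X] (f : X → X) (hf : Continuous f)
    (r : ℝ) (hr : 0 < r) (x y : X)
    (hbd : ∀ j : ℕ, 1 ≤ j → dist (f^[j] x) (f^[j] y) ≤ r)
    (ε : ℝ) (hε0 : 0 < ε) (hε1 : ε ≤ 1)
    (hD2 : lowerDistFn f x y ε ≤ 1 - ε ∧ ∀ δ : ℝ, 0 < δ → upperDistFn f x y δ = 1) :
    IsMLYPair f (ε ^ 2) x y := by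
  obtain ⟨hlow, hupp⟩ := hD2
  set a : ℕ → ℝ := fun j => dist (f^[j] x) (f^[j] y) with ha
  set u : ℕ → ℝ := fun n => (∑ j ∈ Finset.Icc 1 n, a j) / (n : ℝ) with hu
  -- Finset version of the counting sets
  set cF : ℝ → ℕ → Finset ℕ := fun δ n => (Finset.Icc 1 n).filter (fun j => a j < δ) with hcF
  set v : ℝ → ℕ → ℝ := fun δ n => ((cF δ n).card : ℝ) / (n : ℝ) with hv
  have hcard : ∀ δ : ℝ, ∀ n : ℕ,
      (Nat.card ↥({j : ℕ | a j < δ} ∩ Set.Icc 1 n) : ℝ) = ((cF δ n).card : ℝ) := by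
    intro δ n
    congr 1
    rw [Nat.card_coe_set_eq]
    have hset : {j : ℕ | a j < δ} ∩ Set.Icc 1 n = ↑(cF δ n) := by
      ext j
      simp [hcF, Set.mem_Icc, and_comm]
    rw [hset, Set.ncard_coe_finset]
  have hlowv : ∀ δ : ℝ, lowerDistFn f x y δ = liminf (v δ) atTop := by
    intro δ
    unfold lowerDistFn lowerDensity
    congr 1
    funext n
    rw [hcard]
  have huppv : ∀ δ : ℝ, upperDistFn f x y δ = limsup (v δ) atTop := by
    intro δ
    unfold upperDistFn upperDensity
    congr 1
    funext n
    rw [hcard]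
  have hcardle : ∀ δ : ℝ, ∀ n : ℕ, (cF δ n).card ≤ n := by
    intro δ n
    calc (cF δ n).card ≤ (Finset.Icc 1 n).card := Finset.card_filter_le _ _
      _ = n := by rw [Nat.card_Icc]; omega
  have hv0 : ∀ δ n, 0 ≤ v δ n := fun δ n => by positivity
  have hv1 : ∀ δ n, v δ n ≤ 1 := by
    intro δ n
    rcases Nat.eq_zero_or_pos n with h0 | h1
    · simp [hv, h0]
    · rw [hv]
      rw [div_le_one (by exact_mod_cast h1)]
      exact_mod_cast hcardle δ n
  have ha0 : ∀ j, 0 ≤ a j := fun j => dist_nonneg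
  have hu0 : ∀ n, 0 ≤ u n := fun n =>
    div_nonneg (Finset.sum_nonneg fun j _ => ha0 j) (Nat.cast_nonneg n)
  have hur : ∀ n, u n ≤ r := by
    intro n
    rcases Nat.eq_zero_or_pos n with h0 | h1
    · simp [hu, h0]; exact hr.le
    · rw [hu, div_le_iff₀ (by exact_mod_cast h1)]
      calc ∑ j ∈ Finset.Icc 1 n, a j ≤ ∑ _j ∈ Finset.Icc 1 n, r :=
            Finset.sum_le_sum fun j hj => hbd j (Finset.mem_Icc.mp hj).1
        _ = r * n := by rw [Finset.sum_const, Nat.card_Icc]; simp [mul_comm]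
  have hbdd_le : IsBoundedUnder (· ≤ ·) atTop u := isBoundedUnder_of ⟨r, hur⟩
  have hbdd_ge : IsBoundedUnder (· ≥ ·) atTop u := isBoundedUnder_of ⟨0, hu0⟩
  -- split of the sum
  have hsplit : ∀ δ : ℝ, ∀ n : ℕ,
      ∑ j ∈ Finset.Icc 1 n, a j
        = (∑ j ∈ cF δ n, a j) + ∑ j ∈ (Finset.Icc 1 n).filter (fun j => ¬ a j < δ), a j := by
    intro δ n
    exact (Finset.sum_filter_add_sum_filter_not _ _ _).symm
  have hcards : ∀ δ : ℝ, ∀ n : ℕ,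
      ((Finset.Icc 1 n).filter (fun j => ¬ a j < δ)).card = n - (cF δ n).card := by
    intro δ n
    have := Finset.card_filter_add_card_filter_not (s := Finset.Icc 1 n)
      (p := fun j => a j < δ)
    simp only [not_lt] at this ⊢
    simp only [hcF]
    rw [Nat.card_Icc] at this
    omega
  -- Key inequality 1 : ε * (1 - v ε n) ≤ u n  for n ≥ 1
  have hkey1 : ∀ n : ℕ, 1 ≤ n → ε * (1 - v ε n) ≤ u n := by
    intro n hn
    have hnpos : (0:ℝ) < n := by exact_mod_cast hn
    have hS : ε * ((n : ℝ) - (cF ε n).card) ≤ ∑ j ∈ Finset.Icc 1 n, a j := by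
      rw [hsplit ε n]
      have h1 : (0:ℝ) ≤ ∑ j ∈ cF ε n, a j := Finset.sum_nonneg fun j _ => ha0 j
      have h2 : ε * ((n : ℝ) - (cF ε n).card)
          ≤ ∑ j ∈ (Finset.Icc 1 n).filter (fun j => ¬ a j < ε), a j := by
        have : ∀ j ∈ (Finset.Icc 1 n).filter (fun j => ¬ a j < ε), ε ≤ a j := by
          intro j hj
          exact not_lt.mp (Finset.mem_filter.mp hj).2
        calc ε * ((n : ℝ) - (cF ε n).card)
            = (((Finset.Icc 1 n).filter (fun j => ¬ a j < ε)).card : ℝ) * ε := by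
              rw [hcards ε n, Nat.cast_sub (hcardle ε n)]; ring
          _ = ∑ _j ∈ (Finset.Icc 1 n).filter (fun j => ¬ a j < ε), ε := by
              rw [Finset.sum_const, nsmul_eq_mul]
          _ ≤ _ := Finset.sum_le_sum this
      linarith
    have hvn : v ε n * n = ((cF ε n).card : ℝ) := by
      rw [hv]; field_simp
    rw [hu, le_div_iff₀ hnpos]
    nlinarith [hS, hvn]
  -- Key inequality 2 : u n ≤ δ + r * (1 - v δ n)  for n ≥ 1, δ > 0
  have hkey2 : ∀ δ : ℝ, 0 < δ → ∀ n : ℕ, 1 ≤ n → u n ≤ δ + r * (1 - v δ n) := by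
    intro δ hδ n hn
    have hnpos : (0:ℝ) < n := by exact_mod_cast hn
    have hS : ∑ j ∈ Finset.Icc 1 n, a j
        ≤ δ * (cF δ n).card + r * ((n : ℝ) - (cF δ n).card) := by
      rw [hsplit δ n]
      have h1 : ∑ j ∈ cF δ n, a j ≤ δ * (cF δ n).card := by
        calc ∑ j ∈ cF δ n, a j ≤ ∑ _j ∈ cF δ n, δ :=
              Finset.sum_le_sum fun j hj => le_of_lt (Finset.mem_filter.mp hj).2
          _ = δ * (cF δ n).card := by rw [Finset.sum_const, nsmul_eq_mul, mul_comm]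
      have h2 : ∑ j ∈ (Finset.Icc 1 n).filter (fun j => ¬ a j < δ), a j
          ≤ r * ((n : ℝ) - (cF δ n).card) := by
        calc ∑ j ∈ (Finset.Icc 1 n).filter (fun j => ¬ a j < δ), a j
            ≤ ∑ _j ∈ (Finset.Icc 1 n).filter (fun j => ¬ a j < δ), r :=
              Finset.sum_le_sum fun j hj =>
                hbd j (Finset.mem_Icc.mp (Finset.mem_filter.mp hj).1).1
          _ = r * ((n : ℝ) - (cF δ n).card) := by
              rw [Finset.sum_const, nsmul_eq_mul, hcards δ n,
                Nat.cast_sub (hcardle δ n), mul_comm]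
      linarith
    have hvn : v δ n * n = ((cF δ n).card : ℝ) := by
      rw [hv]; field_simp
    have hcl : ((cF δ n).card : ℝ) ≤ n := by exact_mod_cast hcardle δ n
    rw [hu, div_le_iff₀ hnpos]
    nlinarith [hS, hvn, hcl]
  constructor
  · -- limsup part
    rw [hlowv ε] at hlow
    have hmain : ∀ η : ℝ, 0 < η → ε ^ 2 - ε * η ≤ limsup u atTop := by
      intro η hη
      have hlt : liminf (v ε) atTop < 1 - ε + η := by linarith
      have hfreq : ∃ᶠ n in atTop, v ε n < 1 - ε + η :=
        frequently_lt_of_liminf_lt (isCoboundedUnder_ge_of_le atTop (fun n => hv1 ε n)) hlt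
      have hfreq2 : ∃ᶠ n in atTop, ε ^ 2 - ε * η ≤ u n := by
        refine (hfreq.and_eventually (eventually_ge_atTop 1)).mono ?_
        rintro n ⟨h1, h2⟩
        have := hkey1 n h2
        nlinarith
      exact le_limsup_of_frequently_le hfreq2 hbdd_le
    by_contra hcon
    push_neg at hcon
    have hη : 0 < (ε ^ 2 - limsup u atTop) / (2 * ε) := by
      apply div_pos (by linarith) (by linarith)
    have := hmain _ hη
    have : ε * ((ε ^ 2 - limsup u atTop) / (2 * ε)) = (ε ^ 2 - limsup u atTop) / 2 := by
      field_simp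
    nlinarith [hmain _ hη]
  · -- liminf part
    have hge : 0 ≤ liminf u atTop :=
      le_liminf_of_le (isCoboundedUnder_ge_of_le atTop (fun n => hur n)) (Eventually.of_forall hu0)
    have hle : ∀ δ : ℝ, 0 < δ → liminf u atTop ≤ δ := by
      intro δ hδ
      have hδ2 : (0:ℝ) < δ / 2 := by linarith
      have hupp2 := hupp (δ / 2) hδ2
      rw [huppv] at hupp2
      set η := δ / (2 * r) with hηdef
      have hηpos : 0 < η := by positivity
      have hlt : 1 - η < limsup (v (δ / 2)) atTop := by rw [hupp2]; linarith
      have hfreq : ∃ᶠ n in atTop, 1 - η < v (δ / 2) n :=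
        frequently_lt_of_lt_limsup (isCoboundedUnder_le_of_le atTop (fun n => hv0 (δ/2) n)) hlt
      have hfreq2 : ∃ᶠ n in atTop, u n ≤ δ := by
        refine (hfreq.and_eventually (eventually_ge_atTop 1)).mono ?_
        rintro n ⟨h1, h2⟩
        have hk := hkey2 (δ / 2) hδ2 n h2
        have hrη : r * η = δ / 2 := by
          rw [hηdef]; field_simp
        have : r * (1 - v (δ/2) n) ≤ r * η := by
          apply mul_le_mul_of_nonneg_left _ hr.le
          linarith
        linarith
      exact liminf_le_of_frequently_le hfreq2 hbdd_ge
    have : liminf u atTop ≤ 0 := by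
      by_contra hcon
      push_neg at hcon
      have := hle (liminf u atTop / 2) (by linarith)
      linarith
    linarith
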